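/- Let α₂ > 0 be a fixed real number, N ≥ 2 an integer, and U ≥ N ≥ 1 real numbers. Then the number of integer quadruples (y₁,y₂,y₃,y₄) with N ≤ y_i ≤ 2N and |y₁² − y₂² − α₂(y₃² − y₄²)| ≤ N²/U is ≪ N²(1 + N²/U) log N, with implied constant depending only on α₂. -/

import Mathlib

lemma card_int_le (s : Finset ℤ) (a b : ℝ) (hab : a ≤ b)
    (h : ∀ x ∈ s, a ≤ (x : ℝ) ∧ (x : ℝ) ≤ b) : (s.card : ℝ) ≤ b - a + 1 := by
  have hsub : s ⊆ Finset.Icc ⌈a⌉ ⌊b⌋ := fun x hx =>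
    Finset.mem_Icc.2 ⟨Int.ceil_le.2 (h x hx).1, Int.le_floor.2 (h x hx).2⟩
  have h1 : (s.card : ℝ) ≤ ((Finset.Icc ⌈a⌉ ⌊b⌋).card : ℝ) := by
    exact_mod_cast Finset.card_le_card hsub
  refine h1.trans ?_
  rw [Int.card_Icc]
  rcases le_or_gt (⌊b⌋ + 1 - ⌈a⌉) 0 with hc | hc
  · rw [Int.toNat_of_nonpos hc]
    push_cast
    linarith
  · have h2 : ((⌊b⌋ + 1 - ⌈a⌉).toNat : ℤ) = ⌊b⌋ + 1 - ⌈a⌉ := Int.toNat_of_nonneg hc.le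
    have h3 : ((⌊b⌋ + 1 - ⌈a⌉).toNat : ℝ) = (⌊b⌋ : ℝ) + 1 - (⌈a⌉ : ℝ) := by
      exact_mod_cast h2
    rw [h3]
    have hb := Int.floor_le b
    have ha := Int.le_ceil a
    linarith

lemma card_mult_le (e lo hi : ℤ) (he : 0 < e) (hlh : lo ≤ hi) :
    (((Finset.Icc lo hi).filter (fun b => e ∣ b)).card : ℝ) ≤ ((hi : ℝ) - lo) / e + 1 := by
  have hreal : (0 : ℝ) < (e : ℝ) := by exact_mod_cast he
  set s := (Finset.Icc lo hi).filter (fun b => e ∣ b) with hs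
  have hcard : s.card = (s.image (fun b => b / e)).card := by
    rw [Finset.card_image_of_injOn]
    intro x hx y hy hxy
    simp only [hs, Finset.coe_filter, Set.mem_setOf_eq] at hx hy
    have hx' := Int.ediv_mul_cancel hx.2
    have hy' := Int.ediv_mul_cancel hy.2
    simp only at hxy
    rw [← hx', ← hy', hxy]
  rw [hcard]
  have hmem : ∀ k ∈ s.image (fun b => b / e), ((lo : ℝ) / e) ≤ (k : ℝ) ∧ (k : ℝ) ≤ (hi : ℝ) / e := by
    intro k hk
    rw [Finset.mem_image] at hk
    obtain ⟨x, hx, rfl⟩ := hk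
    rw [hs, Finset.mem_filter, Finset.mem_Icc] at hx
    have hxe : x / e * e = x := Int.ediv_mul_cancel hx.2
    have h1 : (lo : ℝ) ≤ (x / e : ℤ) * e := by
      rw [← Int.cast_mul, hxe]; exact_mod_cast hx.1.1
    have h2 : ((x / e : ℤ) : ℝ) * e ≤ hi := by
      rw [← Int.cast_mul, hxe]; exact_mod_cast hx.1.2
    constructor
    · rw [div_le_iff₀ hreal]; linarith
    · rw [le_div_iff₀ hreal]; linarith
  have hab : (lo : ℝ) / e ≤ (hi : ℝ) / e := by
    have : (lo:ℝ) ≤ hi := by exact_mod_cast hlh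
    gcongr
  have := card_int_le _ _ _ hab hmem
  refine this.trans (le_of_eq ?_)
  field_simp

lemma harm_bound (m : ℕ) :
    ∑ d ∈ Finset.Icc 1 m, (1 : ℝ) / d ≤ 1 + Real.log m := by
  have h := harmonic_le_one_add_log m
  have h2 : (harmonic m : ℝ) = ∑ d ∈ Finset.Icc 1 m, (1 : ℝ) / d := by
    rw [harmonic_eq_sum_Icc]
    push_cast
    simp [one_div]
  linarith

set_option maxHeartbeats 1600000 in
theorem stmt_14 (α₂ : ℝ) (hα₂ : 0 < α₂) :
    ∃ C > (0 : ℝ), ∀ N : ℕ, 2 ≤ N → ∀ U : ℝ, (N : ℝ) ≤ U →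
      (((((Finset.Icc (N : ℤ) (2 * N) ×ˢ Finset.Icc (N : ℤ) (2 * N)) ×ˢ
          (Finset.Icc (N : ℤ) (2 * N) ×ˢ Finset.Icc (N : ℤ) (2 * N))).filter
        (fun q => |((q.1.1 : ℝ) ^ 2 - (q.1.2 : ℝ) ^ 2
            - α₂ * ((q.2.1 : ℝ) ^ 2 - (q.2.2 : ℝ) ^ 2))| ≤ (N : ℝ) ^ 2 / U)).card : ℝ))
      ≤ C * (N : ℝ) ^ 2 * (1 + (N : ℝ) ^ 2 / U) * Real.log N := by
  classical
  have hl2 : (0 : ℝ) < Real.log 2 := Real.log_pos (by norm_num)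
  set B₂ : ℝ := 24 + 81 / Real.log 2 with hB₂def
  have hB₂pos : 0 < B₂ := by positivity
  refine ⟨(1 / α₂ + 1) * B₂, by positivity, ?_⟩
  intro N hN U hU
  -- basic positivity
  have hN0 : (0 : ℝ) < N := by
    have : (2 : ℝ) ≤ N := by exact_mod_cast hN
    linarith
  have hU0 : (0 : ℝ) < U := lt_of_lt_of_le hN0 hU
  have hNZ : (2 : ℤ) ≤ (N : ℤ) := by exact_mod_cast hN
  have hlogN : Real.log 2 ≤ Real.log N :=
    Real.log_le_log (by norm_num) (by exact_mod_cast hN)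
  have hlogN0 : 0 < Real.log N := lt_of_lt_of_le hl2 hlogN
  set ε : ℝ := (N : ℝ) ^ 2 / U with hεdef
  have hε0 : 0 ≤ ε := by positivity
  set I : Finset ℤ := Finset.Icc (N : ℤ) (2 * N) with hI
  set T : Finset (ℤ × ℤ) := I ×ˢ I with hT
  set f : ℤ × ℤ → ℤ := fun p => p.1 ^ 2 - p.2 ^ 2 with hf
  set M : Finset ℤ := Finset.Icc (-(4 * (N : ℤ) ^ 2)) (4 * (N : ℤ) ^ 2) with hM
  set r : ℤ → ℕ := fun m => (T.filter (fun p => f p = m)).card with hr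
  set P : Finset (ℤ × ℤ) :=
    (M ×ˢ M).filter (fun p => |(p.1 : ℝ) - α₂ * (p.2 : ℝ)| ≤ ε) with hP
  set S : Finset ((ℤ × ℤ) × ℤ × ℤ) := ((T ×ˢ T).filter
        (fun q => |((q.1.1 : ℝ) ^ 2 - (q.1.2 : ℝ) ^ 2
            - α₂ * ((q.2.1 : ℝ) ^ 2 - (q.2.2 : ℝ) ^ 2))| ≤ ε)) with hS
  show (S.card : ℝ) ≤ (1 / α₂ + 1) * B₂ * (N : ℝ) ^ 2 * (1 + ε) * Real.log N
  -- values of f on T lie in M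
  have hfM : ∀ p ∈ T, f p ∈ M := by
    intro p hp
    rw [hT, Finset.mem_product, hI, Finset.mem_Icc, Finset.mem_Icc] at hp
    rw [hM, Finset.mem_Icc, hf]
    simp only
    constructor <;> nlinarith [hp.1.1, hp.1.2, hp.2.1, hp.2.2]
  -- Step A : card S ≤ ∑ over P of r*r
  have hA : S.card ≤ ∑ p ∈ P, r p.1 * r p.2 := by
    have hmap : ∀ q ∈ S, (f q.1, f q.2) ∈ P := by
      intro q hq
      rw [hS, Finset.mem_filter] at hq
      obtain ⟨hqT, hqc⟩ := hq
      rw [Finset.mem_product] at hqT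
      rw [hP, Finset.mem_filter, Finset.mem_product]
      refine ⟨⟨hfM _ hqT.1, hfM _ hqT.2⟩, ?_⟩
      have : ((f q.1 : ℤ) : ℝ) - α₂ * ((f q.2 : ℤ) : ℝ)
          = (q.1.1 : ℝ) ^ 2 - (q.1.2 : ℝ) ^ 2 - α₂ * ((q.2.1 : ℝ) ^ 2 - (q.2.2 : ℝ) ^ 2) := by
        rw [hf]; push_cast; ring
      rw [this]
      exact hqc
    rw [Finset.card_eq_sum_card_fiberwise hmap]
    refine Finset.sum_le_sum ?_
    intro p hp
    have hsub : S.filter (fun q => (f q.1, f q.2) = p) ⊆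
        (T.filter (fun x => f x = p.1)) ×ˢ (T.filter (fun x => f x = p.2)) := by
      intro q hq
      rw [Finset.mem_filter] at hq
      obtain ⟨hqS, hqp⟩ := hq
      have hqT : q ∈ T ×ˢ T := Finset.mem_of_mem_filter _ hqS
      rw [Finset.mem_product] at hqT
      rw [Finset.mem_product, Finset.mem_filter, Finset.mem_filter]
      cases hqp
      exact ⟨⟨hqT.1, rfl⟩, hqT.2, rfl⟩
    calc (S.filter (fun q => (f q.1, f q.2) = p)).card
        ≤ _ := Finset.card_le_card hsub
      _ = r p.1 * r p.2 := Finset.card_product _ _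
  -- fiber counts in P
  have hfc1 : ∀ m : ℤ, ((P.filter (fun p => p.1 = m)).card : ℝ) ≤ 2 * ε / α₂ + 1 := by
    intro m
    have himg : (P.filter (fun p => p.1 = m)).card
        = ((P.filter (fun p => p.1 = m)).image Prod.snd).card := by
      rw [Finset.card_image_of_injOn]
      intro x hx y hy hxy
      rw [Finset.mem_coe, Finset.mem_filter] at hx hy
      exact Prod.ext (hx.2.trans hy.2.symm) hxy
    rw [himg]
    have hmem : ∀ l ∈ (P.filter (fun p => p.1 = m)).image Prod.snd,
        ((m : ℝ) - ε) / α₂ ≤ (l : ℝ) ∧ (l : ℝ) ≤ ((m : ℝ) + ε) / α₂ := by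
      intro l hl
      rw [Finset.mem_image] at hl
      obtain ⟨p, hp, rfl⟩ := hl
      rw [Finset.mem_filter] at hp
      obtain ⟨hpP, hp1⟩ := hp
      rw [hP, Finset.mem_filter] at hpP
      have habs := abs_le.1 hpP.2
      rw [hp1] at habs
      constructor
      · rw [div_le_iff₀ hα₂]; linarith [habs.2]
      · rw [le_div_iff₀ hα₂]; linarith [habs.1]
    have hab : ((m : ℝ) - ε) / α₂ ≤ ((m : ℝ) + ε) / α₂ := by gcongr <;> linarith
    have := card_int_le _ _ _ hab hmem
    refine this.trans (le_of_eq ?_)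
    field_simp
    ring
  have hfc2 : ∀ l : ℤ, ((P.filter (fun p => p.2 = l)).card : ℝ) ≤ 2 * ε + 1 := by
    intro l
    have himg : (P.filter (fun p => p.2 = l)).card
        = ((P.filter (fun p => p.2 = l)).image Prod.fst).card := by
      rw [Finset.card_image_of_injOn]
      intro x hx y hy hxy
      rw [Finset.mem_coe, Finset.mem_filter] at hx hy
      exact Prod.ext hxy (hx.2.trans hy.2.symm)
    rw [himg]
    have hmem : ∀ m ∈ (P.filter (fun p => p.2 = l)).image Prod.fst,
        α₂ * (l : ℝ) - ε ≤ (m : ℝ) ∧ (m : ℝ) ≤ α₂ * (l : ℝ) + ε := by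
      intro m hm
      rw [Finset.mem_image] at hm
      obtain ⟨p, hp, rfl⟩ := hm
      rw [Finset.mem_filter] at hp
      obtain ⟨hpP, hp2⟩ := hp
      rw [hP, Finset.mem_filter] at hpP
      have habs := abs_le.1 hpP.2
      rw [hp2] at habs
      constructor
      · linarith [habs.2]
      · linarith [habs.1]
    have hab : α₂ * (l : ℝ) - ε ≤ α₂ * (l : ℝ) + ε := by linarith
    have := card_int_le _ _ _ hab hmem
    refine this.trans (le_of_eq ?_)
    ring
  -- Step B : reduce to ∑ r m ^ 2
  have hmapP1 : ∀ p ∈ P, p.1 ∈ M := by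
    intro p hp
    exact (Finset.mem_product.1 (Finset.mem_of_mem_filter _ hp)).1
  have hmapP2 : ∀ p ∈ P, p.2 ∈ M := by
    intro p hp
    exact (Finset.mem_product.1 (Finset.mem_of_mem_filter _ hp)).2
  have hB1 : ∑ p ∈ P, ((r p.1 : ℝ)) ^ 2 ≤ (2 * ε / α₂ + 1) * ∑ m ∈ M, ((r m : ℝ)) ^ 2 := by
    rw [← Finset.sum_fiberwise_of_maps_to hmapP1 (fun p => ((r p.1 : ℝ)) ^ 2)]
    rw [Finset.mul_sum]
    refine Finset.sum_le_sum ?_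
    intro m _
    have heq : ∑ p ∈ P.filter (fun p => p.1 = m), ((r p.1 : ℝ)) ^ 2
        = ((P.filter (fun p => p.1 = m)).card : ℝ) * (r m : ℝ) ^ 2 := by
      rw [Finset.sum_congr rfl (fun p hp => by rw [(Finset.mem_filter.1 hp).2]),
        Finset.sum_const, nsmul_eq_mul]
    rw [heq]
    exact mul_le_mul_of_nonneg_right (hfc1 m) (by positivity)
  have hB2 : ∑ p ∈ P, ((r p.2 : ℝ)) ^ 2 ≤ (2 * ε + 1) * ∑ m ∈ M, ((r m : ℝ)) ^ 2 := by
    rw [← Finset.sum_fiberwise_of_maps_to hmapP2 (fun p => ((r p.2 : ℝ)) ^ 2)]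
    rw [Finset.mul_sum]
    refine Finset.sum_le_sum ?_
    intro l _
    have heq : ∑ p ∈ P.filter (fun p => p.2 = l), ((r p.2 : ℝ)) ^ 2
        = ((P.filter (fun p => p.2 = l)).card : ℝ) * (r l : ℝ) ^ 2 := by
      rw [Finset.sum_congr rfl (fun p hp => by rw [(Finset.mem_filter.1 hp).2]),
        Finset.sum_const, nsmul_eq_mul]
    rw [heq]
    exact mul_le_mul_of_nonneg_right (hfc2 l) (by positivity)
  have hQnonneg : (0 : ℝ) ≤ ∑ m ∈ M, ((r m : ℝ)) ^ 2 := Finset.sum_nonneg fun m _ => sq_nonneg _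
  have hAB : 2 * (S.card : ℝ) ≤ (2 * (1 / α₂ + 1) * (1 + ε)) * ∑ m ∈ M, ((r m : ℝ)) ^ 2 := by
    have hA' : (S.card : ℝ) ≤ ∑ p ∈ P, (r p.1 : ℝ) * (r p.2 : ℝ) := by
      have h0 : ((∑ p ∈ P, r p.1 * r p.2 : ℕ) : ℝ) = ∑ p ∈ P, (r p.1 : ℝ) * (r p.2 : ℝ) := by
        rw [Nat.cast_sum]
        exact Finset.sum_congr rfl fun p _ => Nat.cast_mul _ _
      rw [← h0]
      exact Nat.cast_le.2 hA
    have h2 : ∑ p ∈ P, 2 * ((r p.1 : ℝ) * (r p.2 : ℝ))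
        ≤ ∑ p ∈ P, (((r p.1 : ℝ)) ^ 2 + ((r p.2 : ℝ)) ^ 2) :=
      Finset.sum_le_sum (fun p _ => by
        rw [← mul_assoc]
        exact two_mul_le_add_sq (r p.1 : ℝ) (r p.2 : ℝ))
    rw [Finset.sum_add_distrib] at h2
    rw [← Finset.mul_sum] at h2
    have hco : (2 * ε / α₂ + 1) + (2 * ε + 1) ≤ 2 * (1 / α₂ + 1) * (1 + ε) := by
      have h1α : 0 < 1 / α₂ := by positivity
      have : 2 * ε / α₂ = 2 * ε * (1 / α₂) := by ring
      rw [this]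
      nlinarith [mul_nonneg hε0 h1α.le]
    calc 2 * (S.card : ℝ) ≤ 2 * ∑ p ∈ P, (r p.1 : ℝ) * (r p.2 : ℝ) := by linarith
      _ ≤ ∑ p ∈ P, ((r p.1 : ℝ)) ^ 2 + ∑ p ∈ P, ((r p.2 : ℝ)) ^ 2 := h2
      _ ≤ (2 * ε / α₂ + 1) * ∑ m ∈ M, ((r m : ℝ)) ^ 2
          + (2 * ε + 1) * ∑ m ∈ M, ((r m : ℝ)) ^ 2 := by linarith
      _ ≤ (2 * (1 / α₂ + 1) * (1 + ε)) * ∑ m ∈ M, ((r m : ℝ)) ^ 2 := by nlinarith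
  -- Step C : ∑ r m ^ 2 = E.card  where E is the equal-values set
  set E : Finset ((ℤ × ℤ) × ℤ × ℤ) := (T ×ˢ T).filter (fun q => f q.1 = f q.2) with hE
  have hQE : ∑ m ∈ M, r m * r m = E.card := by
    have hmapE : ∀ q ∈ E, f q.1 ∈ M := by
      intro q hq
      exact hfM q.1 (Finset.mem_product.1 (Finset.mem_of_mem_filter _ hq)).1
    rw [Finset.card_eq_sum_card_fiberwise hmapE]
    refine Finset.sum_congr rfl ?_
    intro m _
    rw [hr]
    rw [← Finset.card_product]
    congr 1
    refine Finset.ext fun q => ?_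
    constructor
    · intro hq
      have h3 := Finset.mem_product.1 hq
      have h1 := Finset.mem_filter.1 h3.1
      have h2 := Finset.mem_filter.1 h3.2
      exact Finset.mem_filter.2 ⟨Finset.mem_filter.2 ⟨Finset.mem_product.2 ⟨h1.1, h2.1⟩,
        by rw [h1.2, h2.2]⟩, h1.2⟩
    · intro hq
      have h1 := Finset.mem_filter.1 hq
      have h2 := Finset.mem_filter.1 h1.1
      have h3 := Finset.mem_product.1 h2.1
      exact Finset.mem_product.2 ⟨Finset.mem_filter.2 ⟨h3.1, h1.2⟩,
        Finset.mem_filter.2 ⟨h3.2, by rw [← h2.2]; exact h1.2⟩⟩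
  -- Step C2 : E.card ≤ W.card via the substitution G
  set J : Finset ℤ := Finset.Icc (2 * (N : ℤ)) (4 * (N : ℤ)) with hJ
  set W : Finset ((ℤ × ℤ) × ℤ) :=
    ((J ×ˢ J) ×ˢ M).filter (fun t => t.1.1 ∣ t.2 ∧ t.1.2 ∣ t.2) with hW
  have hEW : E.card ≤ W.card := by
    apply Finset.card_le_card_of_injOn
      (fun q => ((q.1.1 + q.1.2, q.2.1 + q.2.2), f q.1))
    · intro q hq
      simp only [Finset.mem_coe, hE, Finset.mem_filter] at hq
      obtain ⟨hqT, heq⟩ := hq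
      rw [Finset.mem_product] at hqT
      have hq1 := hqT.1
      have hq2 := hqT.2
      have hfm := hfM q.1 hq1
      rw [hT, Finset.mem_product, hI, Finset.mem_Icc, Finset.mem_Icc] at hq1 hq2
      rw [Finset.mem_coe, hW, Finset.mem_filter, Finset.mem_product, Finset.mem_product]
      simp only
      refine ⟨⟨⟨?_, ?_⟩, hfm⟩, ?_, ?_⟩
      · rw [hJ, Finset.mem_Icc]
        constructor <;> [linarith [hq1.1.1, hq1.2.1]; linarith [hq1.1.2, hq1.2.2]]
      · rw [hJ, Finset.mem_Icc]
        constructor <;> [linarith [hq2.1.1, hq2.2.1]; linarith [hq2.1.2, hq2.2.2]]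
      · exact ⟨q.1.1 - q.1.2, by rw [hf]; ring⟩
      · refine ⟨q.2.1 - q.2.2, ?_⟩
        show f q.1 = _
        rw [heq, hf]; ring
    · intro q hq q' hq' hGq
      simp only [Finset.mem_coe, hE, Finset.mem_filter] at hq hq'
      obtain ⟨hqT, heq⟩ := hq
      obtain ⟨hqT', heq'⟩ := hq'
      rw [Finset.mem_product] at hqT hqT'
      have hq1 := hqT.1; have hq2 := hqT.2
      have hq1' := hqT'.1; have hq2' := hqT'.2
      rw [hT, Finset.mem_product, hI, Finset.mem_Icc, Finset.mem_Icc] at hq1 hq2 hq1' hq2'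
      simp only [Prod.mk.injEq] at hGq
      obtain ⟨⟨hs1, hs2⟩, hm⟩ := hGq
      have hspos : (0 : ℤ) < q.1.1 + q.1.2 := by linarith [hq1.1.1, hq1.2.1]
      have hspos2 : (0 : ℤ) < q.2.1 + q.2.2 := by linarith [hq2.1.1, hq2.2.1]
      have hfq : f q.1 = (q.1.1 - q.1.2) * (q.1.1 + q.1.2) := by rw [hf]; ring
      have hfq' : f q'.1 = (q'.1.1 - q'.1.2) * (q'.1.1 + q'.1.2) := by rw [hf]; ring
      have hgq : f q.2 = (q.2.1 - q.2.2) * (q.2.1 + q.2.2) := by rw [hf]; ring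
      have hgq' : f q'.2 = (q'.2.1 - q'.2.2) * (q'.2.1 + q'.2.2) := by rw [hf]; ring
      have hd1 : q.1.1 - q.1.2 = q'.1.1 - q'.1.2 := by
        have h := hm
        rw [hfq, hfq', ← hs1] at h
        exact mul_right_cancel₀ (ne_of_gt hspos) h
      have hd2 : q.2.1 - q.2.2 = q'.2.1 - q'.2.2 := by
        have h : f q.2 = f q'.2 := by rw [← heq, ← heq', hm]
        rw [hgq, hgq', ← hs2] at h
        exact mul_right_cancel₀ (ne_of_gt hspos2) h
      have e11 : q.1.1 = q'.1.1 := by linarith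
      have e12 : q.1.2 = q'.1.2 := by linarith
      have e21 : q.2.1 = q'.2.1 := by linarith
      have e22 : q.2.2 = q'.2.2 := by linarith
      exact Prod.ext (Prod.ext e11 e12) (Prod.ext e21 e22)
  -- Step C3 : W.card via lcm counts
  have hWb : (W.card : ℝ) ≤ ∑ p ∈ J ×ˢ J, (2 * ((Int.gcd p.1 p.2 : ℕ) : ℝ) + 1) := by
    have hmapW : ∀ t ∈ W, t.1 ∈ J ×ˢ J := fun t ht =>
      (Finset.mem_product.1 (Finset.mem_of_mem_filter _ ht)).1
    rw [Finset.card_eq_sum_card_fiberwise hmapW, Nat.cast_sum]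
    refine Finset.sum_le_sum ?_
    intro p hp
    rw [Finset.mem_product] at hp
    have hpJ1 := hp.1
    have hpJ2 := hp.2
    rw [hJ, Finset.mem_Icc] at hpJ1 hpJ2
    have hp1pos : (0:ℤ) < p.1 := by linarith [hpJ1.1]
    have hp2pos : (0:ℤ) < p.2 := by linarith [hpJ2.1]
    have hLpos : 0 < Int.lcm p.1 p.2 := by
      rw [Int.lcm]
      exact Nat.lcm_pos (Int.natAbs_pos.2 (ne_of_gt hp1pos)) (Int.natAbs_pos.2 (ne_of_gt hp2pos))
    have hLposZ : (0:ℤ) < (Int.lcm p.1 p.2 : ℤ) := by exact_mod_cast hLpos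
    have hLR : (0:ℝ) < ((Int.lcm p.1 p.2 : ℕ) : ℝ) := by exact_mod_cast hLpos
    have himg : (W.filter (fun t => t.1 = p)).card
        = ((W.filter (fun t => t.1 = p)).image Prod.snd).card := by
      rw [Finset.card_image_of_injOn]
      intro x hx y hy hxy
      rw [Finset.mem_coe, Finset.mem_filter] at hx hy
      exact Prod.ext (hx.2.trans hy.2.symm) hxy
    have hsub : (W.filter (fun t => t.1 = p)).image Prod.snd
        ⊆ M.filter (fun m => (Int.lcm p.1 p.2 : ℤ) ∣ m) := by
      intro m hm
      rw [Finset.mem_image] at hm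
      obtain ⟨t, ht, rfl⟩ := hm
      rw [Finset.mem_filter] at ht
      obtain ⟨htW, ht1⟩ := ht
      rw [hW, Finset.mem_filter] at htW
      obtain ⟨htP, hd1, hd2⟩ := htW
      rw [ht1] at hd1 hd2
      exact Finset.mem_filter.2 ⟨(Finset.mem_product.1 htP).2, Int.coe_lcm_dvd hd1 hd2⟩
    have hcount : ((M.filter (fun m => (Int.lcm p.1 p.2 : ℤ) ∣ m)).card : ℝ)
        ≤ 8*(N:ℝ)^2 / ((Int.lcm p.1 p.2 : ℕ) : ℝ) + 1 := by
      have hle : -(4*(N:ℤ)^2) ≤ 4*(N:ℤ)^2 := by nlinarith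
      have := card_mult_le ((Int.lcm p.1 p.2 : ℕ) : ℤ) (-(4*(N:ℤ)^2)) (4*(N:ℤ)^2) hLposZ hle
      rw [hM]
      refine this.trans (le_of_eq ?_)
      push_cast
      ring
    have hglcm : ((Int.gcd p.1 p.2 : ℕ) : ℝ) * ((Int.lcm p.1 p.2 : ℕ) : ℝ)
        = (p.1 : ℝ) * (p.2 : ℝ) := by
      have h1 : ((Int.gcd p.1 p.2 * Int.lcm p.1 p.2 : ℕ) : ℤ) = p.1 * p.2 := by
        rw [Int.gcd_mul_lcm, ← Int.natAbs_mul]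
        exact Int.natAbs_of_nonneg (by positivity)
      exact_mod_cast h1
    have hfin : 8*(N:ℝ)^2 / ((Int.lcm p.1 p.2 : ℕ) : ℝ) ≤ 2 * ((Int.gcd p.1 p.2 : ℕ) : ℝ) := by
      rw [div_le_iff₀ hLR]
      have hb1 : 2*(N:ℝ) ≤ (p.1 : ℝ) := by exact_mod_cast hpJ1.1
      have hb2 : 2*(N:ℝ) ≤ (p.2 : ℝ) := by exact_mod_cast hpJ2.1
      nlinarith [hglcm, hN0]
    calc ((W.filter (fun t => t.1 = p)).card : ℝ)
        = (((W.filter (fun t => t.1 = p)).image Prod.snd).card : ℝ) := by rw [himg]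
      _ ≤ ((M.filter (fun m => (Int.lcm p.1 p.2 : ℤ) ∣ m)).card : ℝ) := by
          exact_mod_cast Finset.card_le_card hsub
      _ ≤ 8*(N:ℝ)^2 / ((Int.lcm p.1 p.2 : ℕ) : ℝ) + 1 := hcount
      _ ≤ 2 * ((Int.gcd p.1 p.2 : ℕ) : ℝ) + 1 := by linarith
  -- Step C4 : gcd sums
  have hJcard : ((J.card : ℕ) : ℝ) = 2 * (N:ℝ) + 1 := by
    have h0 : J.card = (2*(N:ℤ)+1).toNat := by
      rw [hJ, Int.card_Icc]
      congr 1
      ring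
    have h1 : (((2*(N:ℤ)+1).toNat : ℕ) : ℤ) = 2*(N:ℤ)+1 := Int.toNat_of_nonneg (by linarith)
    rw [h0]
    exact_mod_cast h1
  have hcd : ∀ d : ℕ, 1 ≤ d → ((J.filter (fun b => (d:ℤ) ∣ b)).card : ℝ) ≤ 2*(N:ℝ)/d + 1 := by
    intro d hd
    have hd0 : (0:ℤ) < (d:ℤ) := by exact_mod_cast hd
    have h := card_mult_le (d:ℤ) (2*(N:ℤ)) (4*(N:ℤ)) hd0 (by linarith)
    rw [hJ]
    refine h.trans (le_of_eq ?_)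
    push_cast
    ring
  have hgcdsum : ∑ p ∈ J ×ˢ J, ((Int.gcd p.1 p.2 : ℕ) : ℝ)
      ≤ ∑ d ∈ Finset.Icc 1 (4*N), (4*(N:ℝ)^2/d + 4*(N:ℝ) + d) := by
    have h1 : ∀ p ∈ J ×ˢ J, ((Int.gcd p.1 p.2 : ℕ) : ℝ)
        ≤ ∑ d ∈ (Finset.Icc 1 (4*N)).filter
            (fun d : ℕ => ((d:ℤ) ∣ p.1 ∧ (d:ℤ) ∣ p.2)), (d:ℝ) := by
      intro p hp
      rw [Finset.mem_product] at hp
      have hpJ1 := hp.1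
      have hpJ2 := hp.2
      rw [hJ, Finset.mem_Icc] at hpJ1 hpJ2
      have hp1pos : (0:ℤ) < p.1 := by linarith [hpJ1.1]
      refine Finset.single_le_sum (f := fun d : ℕ => (d:ℝ)) (fun d _ => by positivity) ?_
      rw [Finset.mem_filter, Finset.mem_Icc]
      have hdl : ((Int.gcd p.1 p.2 : ℕ) : ℤ) ∣ p.1 := Int.gcd_dvd_left _ _
      have hgle : ((Int.gcd p.1 p.2 : ℕ) : ℤ) ≤ p.1 := Int.le_of_dvd hp1pos hdl
      have hgub : ((Int.gcd p.1 p.2 : ℕ) : ℤ) ≤ 4*(N:ℤ) := le_trans hgle hpJ1.2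
      have hgpos : 0 < Int.gcd p.1 p.2 := Int.gcd_pos_iff.2 (Or.inl (ne_of_gt hp1pos))
      exact ⟨⟨hgpos, by exact_mod_cast hgub⟩, hdl, Int.gcd_dvd_right _ _⟩
    calc ∑ p ∈ J ×ˢ J, ((Int.gcd p.1 p.2 : ℕ) : ℝ)
        ≤ ∑ p ∈ J ×ˢ J, ∑ d ∈ (Finset.Icc 1 (4*N)).filter
            (fun d : ℕ => ((d:ℤ) ∣ p.1 ∧ (d:ℤ) ∣ p.2)), (d:ℝ) := Finset.sum_le_sum h1
      _ = ∑ p ∈ J ×ˢ J, ∑ d ∈ Finset.Icc 1 (4*N),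
            if ((d:ℤ) ∣ p.1 ∧ (d:ℤ) ∣ p.2) then (d:ℝ) else 0 :=
          Finset.sum_congr rfl fun p _ => Finset.sum_filter _ _
      _ = ∑ d ∈ Finset.Icc 1 (4*N), ∑ p ∈ J ×ˢ J,
            if ((d:ℤ) ∣ p.1 ∧ (d:ℤ) ∣ p.2) then (d:ℝ) else 0 := Finset.sum_comm
      _ ≤ ∑ d ∈ Finset.Icc 1 (4*N), (4*(N:ℝ)^2/d + 4*(N:ℝ) + d) := ?_
    refine Finset.sum_le_sum ?_
    intro d hd
    rw [Finset.mem_Icc] at hd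
    have hd1 : 1 ≤ d := hd.1
    have hdR : (0:ℝ) < (d:ℝ) := by exact_mod_cast hd1
    have heq : (∑ p ∈ J ×ˢ J, if ((d:ℤ) ∣ p.1 ∧ (d:ℤ) ∣ p.2) then (d:ℝ) else 0)
        = ((J.filter (fun b => (d:ℤ) ∣ b)).card : ℝ)^2 * d := by
      rw [← Finset.sum_filter, Finset.filter_product, Finset.sum_const,
        Finset.card_product, nsmul_eq_mul]
      push_cast
      ring
    rw [heq]
    have hc := hcd d hd1
    have hcnn : (0:ℝ) ≤ ((J.filter (fun b => (d:ℤ) ∣ b)).card : ℝ) := by positivity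
    have hsq : ((J.filter (fun b => (d:ℤ) ∣ b)).card : ℝ)^2 ≤ (2*(N:ℝ)/d + 1)^2 := by
      have h2 : (0:ℝ) ≤ 2*(N:ℝ)/d + 1 := by positivity
      nlinarith
    have hexp : (2*(N:ℝ)/d + 1)^2 * d = 4*(N:ℝ)^2/d + 4*(N:ℝ) + d := by
      field_simp
      ring
    calc ((J.filter (fun b => (d:ℤ) ∣ b)).card : ℝ)^2 * d
        ≤ (2*(N:ℝ)/d + 1)^2 * d := mul_le_mul_of_nonneg_right hsq hdR.le
      _ = 4*(N:ℝ)^2/d + 4*(N:ℝ) + d := hexp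
  -- Step C5 : evaluate the d-sum
  have hdsum : ∑ d ∈ Finset.Icc 1 (4*N), (4*(N:ℝ)^2/d + 4*(N:ℝ) + (d:ℝ))
      ≤ 4*(N:ℝ)^2 * (1 + Real.log (4*(N:ℝ))) + 32*(N:ℝ)^2 := by
    have hsplit : ∑ d ∈ Finset.Icc 1 (4*N), (4*(N:ℝ)^2/d + 4*(N:ℝ) + (d:ℝ))
        = 4*(N:ℝ)^2 * (∑ d ∈ Finset.Icc 1 (4*N), (1:ℝ)/d)
          + ∑ d ∈ Finset.Icc 1 (4*N), (4*(N:ℝ) + (d:ℝ)) := by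
      rw [Finset.mul_sum, ← Finset.sum_add_distrib]
      refine Finset.sum_congr rfl fun d _ => by ring
    rw [hsplit]
    have hcard14 : (Finset.Icc 1 (4*N)).card = 4*N := by
      rw [Nat.card_Icc]
      omega
    have h2 : ∑ d ∈ Finset.Icc 1 (4*N), (4*(N:ℝ) + (d:ℝ)) ≤ 32*(N:ℝ)^2 := by
      have hb : ∀ d ∈ Finset.Icc 1 (4*N), (4*(N:ℝ) + (d:ℝ)) ≤ 8*(N:ℝ) := by
        intro d hd
        rw [Finset.mem_Icc] at hd
        have : (d:ℝ) ≤ 4*(N:ℝ) := by exact_mod_cast hd.2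
        linarith
      calc ∑ d ∈ Finset.Icc 1 (4*N), (4*(N:ℝ) + (d:ℝ))
          ≤ ∑ _d ∈ Finset.Icc 1 (4*N), 8*(N:ℝ) := Finset.sum_le_sum hb
        _ = ((4*N : ℕ) : ℝ) * (8*(N:ℝ)) := by
            rw [Finset.sum_const, hcard14, nsmul_eq_mul]
        _ ≤ 32*(N:ℝ)^2 := by push_cast; nlinarith
    have hharm : ∑ d ∈ Finset.Icc 1 (4*N), (1:ℝ)/d ≤ 1 + Real.log (4*(N:ℝ)) := by
      have h := harm_bound (4*N)
      have hcast : ((4*N : ℕ) : ℝ) = 4*(N:ℝ) := by push_cast; ring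
      rw [hcast] at h
      exact h
    have h3 : 4*(N:ℝ)^2 * (∑ d ∈ Finset.Icc 1 (4*N), (1:ℝ)/d)
        ≤ 4*(N:ℝ)^2 * (1 + Real.log (4*(N:ℝ))) :=
      mul_le_mul_of_nonneg_left hharm (by positivity)
    linarith
  have hlog4 : Real.log (4*(N:ℝ)) ≤ 3 * Real.log N := by
    rw [Real.log_mul (by norm_num) (ne_of_gt hN0)]
    have h4 : Real.log 4 ≤ 2 * Real.log N := by
      have h42 : (4:ℝ) = 2^2 := by norm_num
      rw [h42, Real.log_pow]
      push_cast
      linarith [hlogN]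
    linarith
  -- Step C6 : combine into Q-bound
  have hQbound : (∑ m ∈ M, ((r m : ℝ)) ^ 2) ≤ B₂ * (N:ℝ)^2 * Real.log N := by
    have hQcast : ∑ m ∈ M, ((r m : ℝ)) ^ 2 = ((E.card : ℕ) : ℝ) := by
      rw [← hQE, Nat.cast_sum]
      exact Finset.sum_congr rfl fun m _ => by push_cast; ring
    rw [hQcast]
    have hEW' : ((E.card : ℕ) : ℝ) ≤ ((W.card : ℕ) : ℝ) := by exact_mod_cast hEW
    have hWsum : ∑ p ∈ J ×ˢ J, (2 * ((Int.gcd p.1 p.2 : ℕ) : ℝ) + 1)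
        = 2 * (∑ p ∈ J ×ˢ J, ((Int.gcd p.1 p.2 : ℕ):ℝ)) + (((J ×ˢ J).card : ℕ) : ℝ) := by
      rw [Finset.sum_add_distrib, Finset.sum_const, ← Finset.mul_sum, nsmul_eq_mul, mul_one]
    have hcardJJ : (((J ×ˢ J).card : ℕ) : ℝ) = (2*(N:ℝ)+1)^2 := by
      rw [Finset.card_product]
      push_cast
      rw [← hJcard]
      push_cast
      ring
    have hJJ9 : (2*(N:ℝ)+1)^2 ≤ 9*(N:ℝ)^2 := by
      have : (2:ℝ) ≤ (N:ℝ) := by exact_mod_cast hN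
      nlinarith
    have hSg : ∑ p ∈ J ×ˢ J, ((Int.gcd p.1 p.2 : ℕ):ℝ)
        ≤ 12*(N:ℝ)^2*Real.log N + 36*(N:ℝ)^2 := by
      have := hgcdsum.trans hdsum
      nlinarith [sq_nonneg (N:ℝ), hN0]
    have h81 : 81*(N:ℝ)^2 ≤ 81/Real.log 2 * ((N:ℝ)^2 * Real.log N) := by
      have h0 : (0:ℝ) ≤ 81*(N:ℝ)^2/Real.log 2 := by positivity
      have h1 := mul_le_mul_of_nonneg_left hlogN h0
      have h2 : 81*(N:ℝ)^2/Real.log 2 * Real.log 2 = 81*(N:ℝ)^2 := by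
        field_simp
      rw [h2] at h1
      calc 81*(N:ℝ)^2 ≤ 81*(N:ℝ)^2/Real.log 2 * Real.log N := h1
        _ = 81/Real.log 2 * ((N:ℝ)^2 * Real.log N) := by ring
    calc ((E.card : ℕ) : ℝ) ≤ ((W.card : ℕ) : ℝ) := hEW'
      _ ≤ ∑ p ∈ J ×ˢ J, (2 * ((Int.gcd p.1 p.2 : ℕ) : ℝ) + 1) := hWb
      _ = 2 * (∑ p ∈ J ×ˢ J, ((Int.gcd p.1 p.2 : ℕ):ℝ)) + (((J ×ˢ J).card : ℕ) : ℝ) := hWsum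
      _ ≤ 2 * (12*(N:ℝ)^2*Real.log N + 36*(N:ℝ)^2) + 9*(N:ℝ)^2 := by
          rw [hcardJJ]
          have := hSg
          linarith
      _ = 24*(N:ℝ)^2*Real.log N + 81*(N:ℝ)^2 := by ring
      _ ≤ 24*(N:ℝ)^2*Real.log N + 81/Real.log 2 * ((N:ℝ)^2 * Real.log N) := by linarith
      _ = B₂ * (N:ℝ)^2 * Real.log N := by rw [hB₂def]; ring
  -- final assembly
  have hfac : (0:ℝ) ≤ 2*(1/α₂+1)*(1+ε) := by positivity
  have h5 := mul_le_mul_of_nonneg_left hQbound hfac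
  have h6 : (2*(1/α₂+1)*(1+ε)) * (B₂*(N:ℝ)^2*Real.log N)
      = 2 * ((1/α₂+1) * B₂ * (N:ℝ)^2 * (1+ε) * Real.log N) := by ring
  rw [h6] at h5
  linarith [hAB.trans h5]
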